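/- In the D⁻-module ℂ[t,t⁻¹], the subspace ℂ[t] is a D⁻-submodule which is irreducible as a D⁻-module, and it is the maximal proper submodule: every D⁻-submodule of ℂ[t,t⁻¹] other than ℂ[t,t⁻¹] itself is contained in ℂ[t]. -/

import Mathlib

open Filter Module

noncomputable section

/-! ## The Lie algebra `D⁻` of regular differential operators on `ℂ`

The space `ℂ[t,t⁻¹]` of Laurent polynomials is realized as the space `LP = ℤ →₀ ℂ`
of finitely supported functions, `Finsupp.single n 1` playing the role of `tⁿ`. -/

abbrev LP : Type := ℤ →₀ ℂ

/-- Multiplication by `t` : `tⁿ ↦ tⁿ⁺¹`. -/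
def tM : Module.End ℂ LP := Finsupp.lsum ℂ fun n => Finsupp.lsingle (n + 1)

/-- The derivative `d/dt` : `tⁿ ↦ n tⁿ⁻¹`. -/
def ddt : Module.End ℂ LP := Finsupp.lsum ℂ fun n => (n : ℂ) • Finsupp.lsingle (n - 1)

/-- `D = t d/dt`. -/
def Dop : Module.End ℂ LP := tM * ddt

/-- `D⁻`, the Lie algebra of regular differential operators on `ℂ`: the span, inside
`End ℂ (ℂ[t,t⁻¹])`, of the operators `f(t) (d/dt)^m` with `f ∈ ℂ[t]`, `m ∈ ℤ₊`. -/
def Dminus : Submodule ℂ (Module.End ℂ LP) :=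
  Submodule.span ℂ {A | ∃ (k m : ℕ), A = tM ^ k * ddt ^ m}

/-- The subspace `ℂ[t] ⊆ ℂ[t,t⁻¹]`. -/
def polyPart : Submodule ℂ LP := Finsupp.supported ℂ ℂ (Set.Ici (0 : ℤ))

/-- Operators homogeneous of degree `j` for the principal gradation (`deg t = -1`,
`deg d/dt = 1`): those `A` with `A(tⁿ) ∈ ℂ · tⁿ⁻ʲ` for all `n ∈ ℤ`. -/
def homogDeg (j : ℤ) : Submodule ℂ (Module.End ℂ LP) where
  carrier := {A | ∀ n : ℤ, A (Finsupp.single n 1) ∈ (ℂ ∙ (Finsupp.single (n - j) 1 : LP))}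
  add_mem' := by
    intro A B hA hB n
    rw [LinearMap.add_apply]
    exact Submodule.add_mem _ (hA n) (hB n)
  zero_mem' := by
    intro n
    rw [LinearMap.zero_apply]
    exact Submodule.zero_mem _
  smul_mem' := by
    intro c A hA n
    rw [LinearMap.smul_apply]
    exact Submodule.smul_mem _ _ (hA n)

/-- The degree `j` piece `D⁻_j` of the principal `ℤ`-gradation of `D⁻`. -/
def DminusG (j : ℤ) : Submodule ℂ (Module.End ℂ LP) := Dminus ⊓ homogDeg j

/-! ## Representations -/

/-- A representation on `M` of a set `S` of operators (a Lie subalgebra of `End ℂ V`),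
encoded as a function `ρ` defined on all of `End ℂ V` which is linear and bracket-preserving
on members of `S` (its values outside `S` are irrelevant). -/
def IsRepOn {V M : Type*} [AddCommGroup V] [Module ℂ V] [AddCommGroup M] [Module ℂ M]
    (S : Set (Module.End ℂ V)) (ρ : Module.End ℂ V → Module.End ℂ M) : Prop :=
  (∀ A ∈ S, ∀ B ∈ S, ρ (A + B) = ρ A + ρ B) ∧
  (∀ (c : ℂ), ∀ A ∈ S, ρ (c • A) = c • ρ A) ∧
  (∀ A ∈ S, ∀ B ∈ S, ρ ⁅A, B⁆ = ⁅ρ A, ρ B⁆)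

/-- `W` is a submodule for the action `ρ` of `S`. -/
def ActInvariant {V M : Type*} [AddCommGroup V] [Module ℂ V] [AddCommGroup M] [Module ℂ M]
    (S : Set (Module.End ℂ V)) (ρ : Module.End ℂ V → Module.End ℂ M)
    (W : Submodule ℂ M) : Prop :=
  ∀ A ∈ S, W.map (ρ A) ≤ W

/-- The module `M` is irreducible under the action `ρ` of `S`. -/
def IsIrreducibleOn {V M : Type*} [AddCommGroup V] [Module ℂ V] [AddCommGroup M] [Module ℂ M]
    (S : Set (Module.End ℂ V)) (ρ : Module.End ℂ V → Module.End ℂ M) : Prop :=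
  Nontrivial M ∧ ∀ W : Submodule ℂ M, ActInvariant S ρ W → W = ⊥ ∨ W = ⊤

/-! ## Growth -/

/-- The growth of a `ℤ₊`-graded vector space (graded pieces `L j`, `j ≥ 0`), computed from the
filtration by the subspaces `⨁_{i ≤ j} L i`:  `limsup_{j → ∞} log dim (⨁_{i ≤ j} L i) / log j`,
as an extended real number. -/
def gradedGrowth {M : Type*} [AddCommGroup M] [Module ℂ M] (L : ℤ → Submodule ℂ M) : EReal :=
  limsup (fun j : ℕ =>
    ((Real.log (Module.finrank ℂ ↥(⨆ i ∈ Finset.range (j + 1), L (i : ℤ))) /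
      Real.log j : ℝ) : EReal)) atTop

lemma tM_single (n : ℤ) (c : ℂ) : tM (Finsupp.single n c) = Finsupp.single (n+1) c := by
  rw [tM, Finsupp.lsum_single, Finsupp.lsingle_apply]

lemma ddt_single (n : ℤ) (c : ℂ) : ddt (Finsupp.single n c) = Finsupp.single (n-1) ((n:ℂ)*c) := by
  rw [ddt, Finsupp.lsum_single, LinearMap.smul_apply, Finsupp.lsingle_apply, Finsupp.smul_single, smul_eq_mul]

lemma tM_apply (w : LP) (r : ℤ) : tM w r = w (r - 1) := by
  induction w using Finsupp.induction_linear with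
  | zero => simp
  | add f g hf hg => rw [map_add, Finsupp.add_apply, Finsupp.add_apply, hf, hg]
  | single n c =>
      rw [tM_single, Finsupp.single_apply, Finsupp.single_apply]
      congr 1
      simp only [eq_iff_iff]; omega

lemma ddt_apply (w : LP) (r : ℤ) : ddt w r = ((r+1 : ℤ) : ℂ) * w (r + 1) := by
  induction w using Finsupp.induction_linear with
  | zero => simp
  | add f g hf hg =>
      rw [map_add, Finsupp.add_apply, Finsupp.add_apply, hf, hg]; ring
  | single n c =>
      rw [ddt_single, Finsupp.single_apply, Finsupp.single_apply]
      rcases eq_or_ne n (r+1) with h | h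
      · subst h; rw [if_pos (by omega), if_pos rfl]
      · rw [if_neg (by omega), if_neg (by omega), mul_zero]

/-- falling factorial `n (n-1) ⋯ (n-m+1)` in `ℂ`. -/
noncomputable def ff (n : ℤ) (m : ℕ) : ℂ := ∏ i ∈ Finset.range m, ((n : ℂ) - i)

lemma ff_succ (n : ℤ) (m : ℕ) : ff n (m+1) = ff (n-1) m * (n : ℂ) := by
  unfold ff
  rw [Finset.prod_range_succ']
  congr 1
  · exact Finset.prod_congr rfl fun i _ => by push_cast; ring
  · simp

lemma ff_ne_zero (n : ℤ) (m : ℕ) (h : n < 0 ∨ (m:ℤ) ≤ n) : ff n m ≠ 0 := by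
  unfold ff
  apply Finset.prod_ne_zero_iff.2
  intro i hi
  rw [Finset.mem_range] at hi
  have : (n : ℂ) ≠ (i : ℂ) := by
    intro hc
    have : n = (i : ℤ) := by exact_mod_cast hc
    omega
  exact sub_ne_zero.2 this

lemma ff_eq_zero (n : ℤ) (m : ℕ) (h0 : 0 ≤ n) (h : n < m) : ff n m = 0 := by
  unfold ff
  apply Finset.prod_eq_zero (i := n.toNat)
  · rw [Finset.mem_range]; omega
  · rw [sub_eq_zero]; norm_cast; omega

lemma ff_succ' (n : ℤ) (m : ℕ) : ff n (m+1) = ff n m * ((n : ℂ) - m) := by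
  unfold ff
  rw [Finset.prod_range_succ]

lemma tM_pow_apply (k : ℕ) (w : LP) (r : ℤ) : (tM ^ k) w r = w (r - k) := by
  induction k generalizing r with
  | zero => simp
  | succ k ih =>
      rw [pow_succ', Module.End.mul_apply, tM_apply, ih]
      congr 1; push_cast; ring

lemma ddt_pow_apply (m : ℕ) (w : LP) (r : ℤ) : (ddt ^ m) w r = ff (r + m) m * w (r + m) := by
  induction m generalizing r with
  | zero => simp [ff]
  | succ m ih =>
      rw [pow_succ', Module.End.mul_apply, ddt_apply, ih]
      have h1 : r + 1 + (m:ℤ) = r + ((m+1 : ℕ) : ℤ) := by push_cast; ring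
      rw [h1, ff_succ']
      push_cast
      ring

lemma tM_pow_single (k : ℕ) (n : ℤ) (c : ℂ) :
    (tM ^ k) (Finsupp.single n c) = Finsupp.single (n + k) c := by
  ext s
  rw [tM_pow_apply, Finsupp.single_apply, Finsupp.single_apply]
  congr 1
  simp only [eq_iff_iff]; omega

lemma tM_mem : tM ∈ Dminus := Submodule.subset_span ⟨1, 0, by rw [pow_one, pow_zero, mul_one]⟩
lemma ddt_mem : ddt ∈ Dminus := Submodule.subset_span ⟨0, 1, by rw [pow_zero, pow_one, one_mul]⟩

lemma stabW {W : Submodule ℂ LP} (hW : ∀ A ∈ Dminus, W.map A ≤ W) :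
    ∀ x ∈ W, ∀ k m : ℕ, (ddt ^ m) ((tM ^ k) x) ∈ W := by
  have htM : ∀ x ∈ W, tM x ∈ W := fun x hx => hW tM tM_mem ⟨x, hx, rfl⟩
  have hddt : ∀ x ∈ W, ddt x ∈ W := fun x hx => hW ddt ddt_mem ⟨x, hx, rfl⟩
  intro x hx k m
  have h1 : (tM ^ k) x ∈ W := by
    induction k with
    | zero => simpa using hx
    | succ k ih =>
        rw [pow_succ', Module.End.mul_apply]
        exact htM _ ih
  induction m with
  | zero => simpa using h1
  | succ m ih =>
      rw [pow_succ', Module.End.mul_apply]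
      exact hddt _ ih

lemma part1 : ∀ A ∈ Dminus, ∀ x ∈ polyPart, A x ∈ polyPart := by
  intro A hA
  have hA' : A ∈ Submodule.span ℂ {A : Module.End ℂ LP | ∃ (k m : ℕ), A = tM ^ k * ddt ^ m} := hA
  clear hA
  induction hA' using Submodule.span_induction with
  | mem A h =>
      obtain ⟨k, m, rfl⟩ := h
      intro x hx
      simp only [polyPart, Finsupp.mem_supported'] at hx ⊢
      intro r hr
      rw [Set.mem_Ici, not_le] at hr
      rw [Module.End.mul_apply, tM_pow_apply, ddt_pow_apply]
      by_cases h : r - k + m < 0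
      · rw [hx _ (by rw [Set.mem_Ici]; push_neg; omega), mul_zero]
      · rw [ff_eq_zero _ _ (by omega) (by omega), zero_mul]
  | zero => intro x hx; rw [LinearMap.zero_apply]; exact polyPart.zero_mem
  | add A B _ _ hA hB => intro x hx; rw [LinearMap.add_apply]; exact add_mem (hA x hx) (hB x hx)
  | smul c A _ hA => intro x hx; rw [LinearMap.smul_apply]; exact Submodule.smul_mem _ _ (hA x hx)

lemma part3 : ∀ W : Submodule ℂ LP, (∀ A ∈ Dminus, W.map A ≤ W) → W ≠ ⊤ → W ≤ polyPart := by
  intro W hW hWne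
  by_contra hcon
  apply hWne
  rw [SetLike.not_le_iff_exists] at hcon
  obtain ⟨w, hwW, hwp⟩ := hcon
  simp only [polyPart, Finsupp.mem_supported'] at hwp
  push_neg at hwp
  obtain ⟨r0, hr0, hr0ne⟩ := hwp
  rw [Set.mem_Ici, not_le] at hr0
  have hne : w.support.Nonempty := ⟨r0, Finsupp.mem_support_iff.2 hr0ne⟩
  set μ : ℤ := w.support.min' hne with hμ
  have hμr : μ ≤ r0 := Finset.min'_le _ _ (Finsupp.mem_support_iff.2 hr0ne)
  have hμ0 : μ < 0 := lt_of_le_of_lt hμr hr0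
  set Mx : ℤ := w.support.max' hne with hMx
  set k : ℕ := (-1 - μ).toNat with hk
  have hkz : (k:ℤ) = -1 - μ := Int.toNat_of_nonneg (by omega)
  have key : ∀ m : ℕ, (m:ℤ) > Mx + k → Finsupp.single (-1 - (m:ℤ)) (1:ℂ) ∈ W := by
    intro m hm
    have hu : (ddt ^ m) ((tM ^ k) w) ∈ W := stabW hW w hwW k m
    have hval : (ddt ^ m) ((tM ^ k) w) = Finsupp.single (-1 - (m:ℤ)) (ff (-1) m * w μ) := by
      ext s
      rw [ddt_pow_apply, tM_pow_apply, Finsupp.single_apply]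
      rcases eq_or_ne (-1 - (m:ℤ)) s with h | h
      · rw [if_pos h]
        have h1 : s + (m:ℤ) = -1 := by omega
        have h2 : s + (m:ℤ) - k = μ := by omega
        rw [h2, h1]
      · rw [if_neg h]
        by_cases hs : 0 ≤ s
        · have hz : w (s + m - k) = 0 := by
            rw [← Finsupp.notMem_support_iff]
            intro hmem
            have := Finset.le_max' _ _ hmem
            omega
          rw [hz, mul_zero]
        · by_cases h2 : 0 ≤ s + (m:ℤ)
          · rw [ff_eq_zero _ _ h2 (by omega), zero_mul]
          · have hz : w (s + m - k) = 0 := by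
              rw [← Finsupp.notMem_support_iff]
              intro hmem
              have := Finset.min'_le _ _ hmem
              omega
            rw [hz, mul_zero]
    have hc : ff (-1) m * w μ ≠ 0 :=
      mul_ne_zero (ff_ne_zero _ _ (Or.inl (by omega)))
        (Finsupp.mem_support_iff.1 (w.support.min'_mem hne))
    have h1 : Finsupp.single (-1 - (m:ℤ)) (1:ℂ)
        = (ff (-1) m * w μ)⁻¹ • (ddt ^ m) ((tM ^ k) w) := by
      rw [hval, Finsupp.smul_single, smul_eq_mul, inv_mul_cancel₀ hc]
    rw [h1]
    exact W.smul_mem _ hu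
  have hall : ∀ n : ℤ, Finsupp.single n (1:ℂ) ∈ W := by
    intro n
    set m : ℕ := (Mx + k + 1).toNat + (-1 - n).toNat + 1 with hm
    have t1 := Int.self_le_toNat (Mx + k + 1)
    have t2 := Int.self_le_toNat (-1 - n)
    have hm1 : (m:ℤ) > Mx + k := by rw [hm]; push_cast; omega
    have hm2 : -1 - (m:ℤ) ≤ n := by rw [hm]; push_cast; omega
    have hbase := key m hm1
    have h2 := stabW hW _ hbase ((n + 1 + m).toNat) 0
    rw [pow_zero, Module.End.one_apply, tM_pow_single] at h2
    rwa [show (-1 - (m:ℤ)) + ((n + 1 + (m:ℤ)).toNat : ℤ) = n by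
      rw [Int.toNat_of_nonneg (by omega)]; ring] at h2
  rw [eq_top_iff]
  intro x hx
  clear hx
  induction x using Finsupp.induction_linear with
  | zero => exact W.zero_mem
  | add f g hf hg => exact W.add_mem hf hg
  | single a b =>
      have hs : Finsupp.single a b = b • Finsupp.single a (1:ℂ) := by
        rw [Finsupp.smul_single, smul_eq_mul, mul_one]
      rw [hs]; exact W.smul_mem _ (hall a)

lemma part2 : ∀ W : Submodule ℂ LP, W ≤ polyPart → (∀ A ∈ Dminus, W.map A ≤ W) →
    W = ⊥ ∨ W = polyPart := by
  intro W hle hW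
  rcases eq_or_ne W ⊥ with h | h
  · exact Or.inl h
  right
  rw [Submodule.ne_bot_iff] at h
  obtain ⟨w, hwW, hw0⟩ := h
  have hne : w.support.Nonempty := Finsupp.support_nonempty_iff.2 hw0
  have hsupp : ∀ j ∈ w.support, 0 ≤ j := by
    intro j hj
    exact Set.mem_Ici.1 ((Finsupp.mem_supported ℂ w).1 (hle hwW) hj)
  set N : ℤ := w.support.max' hne with hN
  have hN0 : 0 ≤ N := hsupp N (w.support.max'_mem hne)
  set m : ℕ := N.toNat with hm
  have hmz : (m:ℤ) = N := Int.toNat_of_nonneg hN0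
  have hval : (ddt ^ m) w = Finsupp.single 0 (ff N m * w N) := by
    ext s
    rw [ddt_pow_apply, Finsupp.single_apply]
    rcases eq_or_ne (0:ℤ) s with h | h
    · rw [if_pos h, ← h, zero_add, hmz]
    · rw [if_neg h]
      by_cases hs : 0 ≤ s
      · have hz : w (s + m) = 0 := by
          rw [← Finsupp.notMem_support_iff]
          intro hmem
          have := Finset.le_max' _ _ hmem
          omega
        rw [hz, mul_zero]
      · by_cases h2 : 0 ≤ s + (m:ℤ)
        · rw [ff_eq_zero _ _ h2 (by omega), zero_mul]
        · have hz : w (s + m) = 0 := by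
            rw [← Finsupp.notMem_support_iff]
            intro hmem
            have := hsupp _ hmem
            omega
          rw [hz, mul_zero]
  have hu : (ddt ^ m) w ∈ W := by
    have h2 := stabW hW w hwW 0 m
    rwa [pow_zero, Module.End.one_apply] at h2
  have hc : ff N m * w N ≠ 0 :=
    mul_ne_zero (ff_ne_zero _ _ (Or.inr (by omega)))
      (Finsupp.mem_support_iff.1 (w.support.max'_mem hne))
  have h0 : Finsupp.single (0:ℤ) (1:ℂ) ∈ W := by
    have h3 : Finsupp.single (0:ℤ) (1:ℂ) = (ff N m * w N)⁻¹ • (ddt ^ m) w := by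
      rw [hval, Finsupp.smul_single, smul_eq_mul, inv_mul_cancel₀ hc]
    rw [h3]; exact W.smul_mem _ hu
  have hall : ∀ n : ℤ, 0 ≤ n → Finsupp.single n (1:ℂ) ∈ W := by
    intro n hn
    have h2 := stabW hW _ h0 n.toNat 0
    rwa [pow_zero, Module.End.one_apply, tM_pow_single, zero_add,
      Int.toNat_of_nonneg hn] at h2
  apply le_antisymm hle
  intro x hx
  rw [← Finsupp.sum_single x]
  apply Submodule.sum_mem
  intro n hn
  have hn0 : 0 ≤ n := Set.mem_Ici.1 ((Finsupp.mem_supported ℂ x).1 hx hn)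
  have hs : Finsupp.single n (x n) = (x n) • Finsupp.single n (1:ℂ) := by
    rw [Finsupp.smul_single, smul_eq_mul, mul_one]
  rw [hs]
  exact W.smul_mem _ (hall n hn0)

theorem stmt8 :
    -- `ℂ[t]` is a `D⁻`-submodule of `ℂ[t,t⁻¹]`
    (∀ A ∈ Dminus, polyPart.map A ≤ polyPart) ∧
    -- which is irreducible as a `D⁻`-module
    (∀ W : Submodule ℂ LP, W ≤ polyPart → (∀ A ∈ Dminus, W.map A ≤ W) →
      W = ⊥ ∨ W = polyPart) ∧
    -- and is the maximal proper submodule of `ℂ[t,t⁻¹]`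
    (∀ W : Submodule ℂ LP, (∀ A ∈ Dminus, W.map A ≤ W) → W ≠ ⊤ → W ≤ polyPart) := by
  refine ⟨?_, part2, part3⟩
  intro A hA
  rw [Submodule.map_le_iff_le_comap]
  intro x hx
  exact part1 A hA x hx
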